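/- Let X be a complex Banach space and let P, Q be bounded idempotent operators on X. Then P ∼₀ Q (i.e., there exist bounded operators R, T on X with P = RT and Q = TR) if and only if the range of P is linearly homeomorphic to the range of Q. -/

import Mathlib

private lemma fix_of_mem_range {X : Type*} [NormedAddCommGroup X] [NormedSpace ℂ X]
    {P : X →L[ℂ] X} (hP : P * P = P) {x : X} (hx : x ∈ LinearMap.range (P : X →ₗ[ℂ] X)) : P x = x := by
  obtain ⟨y, rfl⟩ := hx
  have : (P * P) y = P y := by rw [hP]
  simpa [ContinuousLinearMap.mul_apply] using this

/-- **Proposition 2.1.** For idempotent operators `P, Q` on a complex Banach space `X`,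
`P ∼₀ Q` (i.e. `P = R * T` and `Q = T * R` for some bounded operators `R, T`) if and only
if the range of `P` is linearly homeomorphic to the range of `Q`. -/
theorem mvNeq_iff_range_linearly_homeomorphic
    {X : Type*} [NormedAddCommGroup X] [NormedSpace ℂ X] [CompleteSpace X]
    (P Q : X →L[ℂ] X) (hP : P * P = P) (hQ : Q * Q = Q) :
    (∃ R T : X →L[ℂ] X, R * T = P ∧ T * R = Q) ↔
      Nonempty (↥(LinearMap.range (P : X →ₗ[ℂ] X)) ≃L[ℂ] ↥(LinearMap.range (Q : X →ₗ[ℂ] X))) := by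
  constructor
  · rintro ⟨R, T, hRT, hTR⟩
    have hTmem : ∀ x : X, x ∈ LinearMap.range (P : X →ₗ[ℂ] X) → T x ∈ LinearMap.range (Q : X →ₗ[ℂ] X) := by
      intro x hx
      refine ⟨T x, ?_⟩
      have h1 : P x = x := fix_of_mem_range hP hx
      calc Q (T x) = T (R (T x)) := by rw [← hTR]; rfl
        _ = T ((R * T) x) := rfl
        _ = T x := by rw [hRT, h1]
    have hRmem : ∀ x : X, x ∈ LinearMap.range (Q : X →ₗ[ℂ] X) → R x ∈ LinearMap.range (P : X →ₗ[ℂ] X) := by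
      intro x hx
      refine ⟨R x, ?_⟩
      have h1 : Q x = x := fix_of_mem_range hQ hx
      calc P (R x) = R (T (R x)) := by rw [← hRT]; rfl
        _ = R ((T * R) x) := rfl
        _ = R x := by rw [hTR, h1]
    let f : ↥(LinearMap.range (P : X →ₗ[ℂ] X)) →L[ℂ] ↥(LinearMap.range (Q : X →ₗ[ℂ] X)) :=
      (T.comp (LinearMap.range (P : X →ₗ[ℂ] X)).subtypeL).codRestrict (LinearMap.range (Q : X →ₗ[ℂ] X))
        (fun x => hTmem x.1 x.2)
    let g : ↥(LinearMap.range (Q : X →ₗ[ℂ] X)) →L[ℂ] ↥(LinearMap.range (P : X →ₗ[ℂ] X)) :=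
      (R.comp (LinearMap.range (Q : X →ₗ[ℂ] X)).subtypeL).codRestrict (LinearMap.range (P : X →ₗ[ℂ] X))
        (fun x => hRmem x.1 x.2)
    refine ⟨ContinuousLinearEquiv.equivOfInverse f g ?_ ?_⟩
    · intro x
      ext
      show R (T x.1) = x.1
      calc R (T x.1) = (R * T) x.1 := rfl
        _ = x.1 := by rw [hRT]; exact fix_of_mem_range hP x.2
    · intro x
      ext
      show T (R x.1) = x.1
      calc T (R x.1) = (T * R) x.1 := rfl
        _ = x.1 := by rw [hTR]; exact fix_of_mem_range hQ x.2
  · rintro ⟨e⟩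
    let Pc : X →L[ℂ] ↥(LinearMap.range (P : X →ₗ[ℂ] X)) :=
      P.codRestrict (LinearMap.range (P : X →ₗ[ℂ] X)) (fun x => ⟨x, rfl⟩)
    let Qc : X →L[ℂ] ↥(LinearMap.range (Q : X →ₗ[ℂ] X)) :=
      Q.codRestrict (LinearMap.range (Q : X →ₗ[ℂ] X)) (fun x => ⟨x, rfl⟩)
    refine ⟨(LinearMap.range (P : X →ₗ[ℂ] X)).subtypeL.comp ((e.symm : ↥(LinearMap.range (Q : X →ₗ[ℂ] X)) →L[ℂ] ↥(LinearMap.range (P : X →ₗ[ℂ] X))).comp Qc),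
      (LinearMap.range (Q : X →ₗ[ℂ] X)).subtypeL.comp ((e : ↥(LinearMap.range (P : X →ₗ[ℂ] X)) →L[ℂ] ↥(LinearMap.range (Q : X →ₗ[ℂ] X))).comp Pc), ?_, ?_⟩
    · ext x
      show ((e.symm (Qc ((e (Pc x)).1)) : ↥(LinearMap.range (P : X →ₗ[ℂ] X))) : X) = P x
      have h1 : Qc ((e (Pc x)).1) = e (Pc x) := by
        ext
        exact fix_of_mem_range hQ (e (Pc x)).2
      rw [h1, e.symm_apply_apply]; rfl
    · ext x
      show ((e (Pc ((e.symm (Qc x)).1)) : ↥(LinearMap.range (Q : X →ₗ[ℂ] X))) : X) = Q x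
      have h1 : Pc ((e.symm (Qc x)).1) = e.symm (Qc x) := by
        ext
        exact fix_of_mem_range hP (e.symm (Qc x)).2
      rw [h1, e.apply_symm_apply]; rfl
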